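/- Let k be a commutative ring and A a commutative k-algebra that is finitely presented as a k-algebra, free of finite rank > 0 as a k-module with basis b, and formally unramified over k (i.e. Ω_{A/k} = 0). Then A is trace-étale over k: the discriminant of the basis b, i.e. the determinant of the matrix (Tr_{A/k}(b_i·b_j)), is a unit of k. -/

import Mathlib

open TensorProduct LinearMap

section aux
variable {k A : Type*} [CommRing k] [CommRing A] [Algebra k A]

/-- `Cmap f (u ⊗ v) = f v • u`. -/
noncomputable def Cmap (f : A →ₗ[k] k) : A ⊗[k] A →ₗ[k] A :=
  (TensorProduct.rid k A).toLinearMap ∘ₗ LinearMap.lTensor A f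

@[simp] lemma Cmap_tmul (f : A →ₗ[k] k) (u v : A) : Cmap f (u ⊗ₜ[k] v) = f v • u := by
  simp [Cmap]

/-- `Emap g (u ⊗ v) = fun a => g (v * a) • u`. -/
noncomputable def Emap (g : A →ₗ[k] k) : A ⊗[k] A →ₗ[k] Module.End k A :=
  TensorProduct.lift <| LinearMap.mk₂ k
    (fun u v => dualTensorHom k A A ((g ∘ₗ LinearMap.mul k A v) ⊗ₜ[k] u))
    (fun u u' v => by ext a; simp)
    (fun c u v => by ext a; simp)
    (fun u v v' => by ext a; simp [add_mul, mul_add, add_smul])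
    (fun c u v => by ext a; simp [mul_smul_comm, smul_smul, mul_comm])

@[simp] lemma Emap_tmul (g : A →ₗ[k] k) (u v : A) :
    Emap g (u ⊗ₜ[k] v) = dualTensorHom k A A ((g ∘ₗ LinearMap.mul k A v) ⊗ₜ[k] u) := rfl

lemma Cmap_left_mul (f : A →ₗ[k] k) (s : A) (z : A ⊗[k] A) :
    Cmap f ((s ⊗ₜ[k] (1 : A)) * z) = s * Cmap f z := by
  induction z using TensorProduct.induction_on with
  | zero => simp
  | tmul u v => simp [Algebra.TensorProduct.tmul_mul_tmul, mul_smul_comm]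
  | add z₁ z₂ h₁ h₂ => simp [mul_add, h₁, h₂]

lemma Cmap_right_mul (f : A →ₗ[k] k) (s : A) (z : A ⊗[k] A) :
    Cmap f (((1 : A) ⊗ₜ[k] s) * z) = Cmap (f ∘ₗ LinearMap.mul k A s) z := by
  induction z using TensorProduct.induction_on with
  | zero => simp
  | tmul u v => simp [Algebra.TensorProduct.tmul_mul_tmul]
  | add z₁ z₂ h₁ h₂ => simp [mul_add, h₁, h₂]

end aux

/-- A finitely presented commutative `k`-algebra `A`, free of finite rank `> 0` as a
`k`-module with basis `b`, and formally unramified over `k` (`Ω_{A/k} = 0`), is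
trace-étale: the discriminant of the basis `b` (the determinant of the trace matrix
`(Tr_{A/k}(bᵢ·bⱼ))`) is a unit of `k`. -/
theorem stmt15 {k A : Type*} [CommRing k] [CommRing A] [Algebra k A]
    {m : ℕ} (hm : 0 < m) (b : Module.Basis (Fin m) k A)
    (hfp : Algebra.FinitePresentation k A)
    (h : Subsingleton (KaehlerDifferential k A)) :
    IsUnit (Matrix.det (Algebra.traceMatrix k b)) := by
  have hfin : Module.Finite k A := Module.Finite.of_basis b
  have hfree : Module.Free k A := Module.Free.of_basis b
  haveI := hfp
  haveI : Algebra.FiniteType k A := inferInstance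
  have hfu : Algebra.FormallyUnramified k A := ⟨h⟩
  obtain ⟨t, ht1, ht2⟩ := (Algebra.FormallyUnramified.iff_exists_tensorProduct (R := k) (S := A)).mp hfu
  -- the swap identity
  have hswap : ∀ s : A, ((1 : A) ⊗ₜ[k] s) * t = (s ⊗ₜ[k] (1 : A)) * t := by
    intro s
    have := ht1 s
    rw [sub_mul, sub_eq_zero] at this
    exact this
  -- Emap g t is multiplication by Cmap g t
  have hE : ∀ (g : A →ₗ[k] k) (a : A), Emap g t a = a * Cmap g t := by
    intro g a
    have h1 : Emap g t a = Cmap g (((1 : A) ⊗ₜ[k] a) * t) := by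
      clear hswap ht1 ht2
      induction t using TensorProduct.induction_on with
      | zero => simp
      | tmul u v => simp [Algebra.TensorProduct.tmul_mul_tmul, mul_comm]
      | add z₁ z₂ h₁ h₂ => simp [mul_add, h₁, h₂]
    rw [h1, hswap, Cmap_left_mul]
  -- trace of Emap g z is g (lmul' z)
  have htr : ∀ (g : A →ₗ[k] k) (z : A ⊗[k] A),
      LinearMap.trace k A (Emap g z) = g (Algebra.TensorProduct.lmul' (S := A) k z) := by
    intro g z
    induction z using TensorProduct.induction_on with
    | zero => simp
    | tmul u v => simp [LinearMap.trace_eq_contract_apply, mul_comm]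
    | add z₁ z₂ h₁ h₂ => simp [h₁, h₂]
  -- main trace identity
  have key : ∀ (f : A →ₗ[k] k) (s : A), Algebra.trace k A (s * Cmap f t) = f s := by
    intro f s
    have h1 : s * Cmap f t = Cmap (f ∘ₗ LinearMap.mul k A s) t := by
      rw [← Cmap_left_mul, ← hswap, Cmap_right_mul]
    have h2 : Algebra.lmul k A (Cmap (f ∘ₗ LinearMap.mul k A s) t)
        = Emap (f ∘ₗ LinearMap.mul k A s) t := by
      ext a
      rw [hE]
      simp [mul_comm]
    rw [h1, Algebra.trace_apply, h2, htr, ht2]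
    simp
  -- build the inverse matrix
  set N : Matrix (Fin m) (Fin m) k := fun l j => b.repr (Cmap (b.coord j) t) l with hN
  apply Matrix.isUnit_det_of_right_inverse (B := N)
  ext i j
  have : (Algebra.traceMatrix k b * N) i j
      = Algebra.trace k A (b i * Cmap (b.coord j) t) := by
    rw [Matrix.mul_apply]
    conv_rhs => rw [← b.sum_repr (Cmap (b.coord j) t)]
    rw [Finset.mul_sum, map_sum]
    refine Finset.sum_congr rfl fun l _ => ?_
    rw [mul_smul_comm, map_smul, smul_eq_mul, mul_comm]
    rfl
  rw [this, key]
  simp [Module.Basis.coord_apply, Module.Basis.repr_self, Finsupp.single_apply, Matrix.one_apply, eq_comm]
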